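/- Let S be a discrete p-toral group with maximal torus T (a discrete p-torus, normal in S with S/T a finite p-group), and let ζ ∈ ℤ_p^× with ζ ≡ 1 mod p and ζ ≠ 1. Suppose ψ₁, ψ₂ are automorphisms of S which both restrict to multiplication by ζ on T and induce the identity on S/T. Then there exists r > 0 such that ψ₁^{p^r} = ψ₂^{p^r}. -/

import Mathlib

/-- The Prüfer `p`-group `ℤ/p^∞`, realised as the `p`-primary component of `ℚ/ℤ`. -/
noncomputable def PruferGroup (p : ℕ) [Fact p.Prime] : AddSubgroup (AddCircle (1 : ℚ)) :=
  AddCommGroup.primaryComponent (AddCircle (1 : ℚ)) p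

/-- Factorisation of geometric sums over the naturals. -/
lemma geom_sum_range_mul_aux (a m n : ℕ) :
    ∑ i ∈ Finset.range (m * n), a ^ i
      = (∑ i ∈ Finset.range m, a ^ i) * ∑ j ∈ Finset.range n, (a ^ m) ^ j := by
  induction n with
  | zero => simp
  | succ n ih =>
    rw [Nat.mul_succ, Finset.sum_range_add, ih, Finset.sum_range_succ, Nat.mul_add]
    congr 1
    have : ∀ i, a ^ (m * n + i) = a ^ (m * n) * a ^ i := fun i => pow_add a _ i
    rw [Finset.sum_congr rfl fun i _ => this i, ← Finset.mul_sum, ← pow_mul,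
      mul_comm (a ^ (m * n))]

/-- If `a ≡ 1 (mod p)` then `p ^ s` divides `1 + a + ⋯ + a^{p^s - 1}`. -/
lemma pow_dvd_geom_sum_aux (p : ℕ) [Fact p.Prime] (a : ℕ) (ha : ((a : ZMod p)) = 1)
    (s : ℕ) : p ^ s ∣ ∑ i ∈ Finset.range (p ^ s), a ^ i := by
  induction s with
  | zero => simp
  | succ s ih =>
    rw [pow_succ, geom_sum_range_mul_aux]
    refine mul_dvd_mul ih ?_
    rw [← ZMod.natCast_eq_zero_iff]
    push_cast
    have : ((a : ZMod p)) ^ p ^ s = 1 := by rw [ha, one_pow]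
    simp [this, Finset.sum_const, ZMod.natCast_self]

theorem adams_automorphisms_stably_equal (p : ℕ) [Fact p.Prime]
    (S : Type*) [Group S] (T : Subgroup S) [T.Normal]
    (n : ℕ) (hT : Nonempty (T ≃* Multiplicative (Fin n → PruferGroup p)))
    (hquot : Finite (S ⧸ T)) (hquotp : IsPGroup p (S ⧸ T))
    (ζ : ℤ_[p]ˣ) (hζ1 : ∃ v : ℤ_[p], (ζ : ℤ_[p]) = 1 + (p : ℤ_[p]) * v)
    (hζne : (ζ : ℤ_[p]) ≠ 1)
    (ψ₁ ψ₂ : MulAut S)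
    (hψ₁T : ∀ t ∈ T, ∀ k : ℕ, t ^ (p ^ k) = 1 → ψ₁ t = t ^ (PadicInt.appr (ζ : ℤ_[p]) k))
    (hψ₂T : ∀ t ∈ T, ∀ k : ℕ, t ^ (p ^ k) = 1 → ψ₂ t = t ^ (PadicInt.appr (ζ : ℤ_[p]) k))
    (hψ₁q : ∀ s : S, s⁻¹ * ψ₁ s ∈ T)
    (hψ₂q : ∀ s : S, s⁻¹ * ψ₂ s ∈ T) :
    ∃ s : ℕ, 0 < s ∧ ψ₁ ^ (p ^ s) = ψ₂ ^ (p ^ s) := by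
  obtain ⟨e⟩ := hT
  -- a helper for enlarging exponents
  have hlift : ∀ (y : S) (k K : ℕ), k ≤ K → y ^ p ^ k = 1 → y ^ p ^ K = 1 := by
    intro y k K hkK h
    have hK : p ^ K = p ^ k * p ^ (K - k) := by
      rw [← pow_add, Nat.add_sub_cancel' hkK]
    rw [hK, pow_mul, h, one_pow]
  -- elements of `T` commute with each other
  have hcomm : ∀ a b : S, a ∈ T → b ∈ T → a * b = b * a := by
    intro a b ha hb
    have := e.injective (a₁ := ⟨a, ha⟩ * ⟨b, hb⟩) (a₂ := ⟨b, hb⟩ * ⟨a, ha⟩)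
      (by rw [map_mul, map_mul, mul_comm])
    exact congrArg Subtype.val this
  -- every element of `T` has `p`-power order
  have horder : ∀ t : S, t ∈ T → ∃ k : ℕ, t ^ p ^ k = 1 := by
    intro t ht
    set g : Fin n → PruferGroup p := Multiplicative.toAdd (e ⟨t, ht⟩) with hg
    have h1 : ∀ i : Fin n, ∃ m : ℕ, addOrderOf ((g i : AddCircle (1 : ℚ))) = p ^ m := by
      intro i
      exact AddCommGroup.mem_primaryComponent_iff_addOrderOf.mp (g i).2
    choose f hf using h1
    refine ⟨Finset.univ.sup f, ?_⟩
    have hkill : ∀ i : Fin n, (p ^ Finset.univ.sup f) • g i = 0 := by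
      intro i
      have hd : addOrderOf ((g i : AddCircle (1 : ℚ))) ∣ p ^ Finset.univ.sup f := by
        rw [hf i]
        exact pow_dvd_pow p (Finset.le_sup (Finset.mem_univ i))
      have := addOrderOf_dvd_iff_nsmul_eq_zero.mp hd
      ext
      simpa using this
    have he1 : e ⟨t, ht⟩ ^ p ^ Finset.univ.sup f = 1 := by
      apply Multiplicative.toAdd.injective
      rw [toAdd_pow]
      funext i
      exact hkill i
    have := e.injective (a₁ := (⟨t, ht⟩ : T) ^ p ^ Finset.univ.sup f) (a₂ := 1)
      (by rw [map_pow, map_one, he1])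
    have := congrArg Subtype.val this
    simpa using this
  -- the two automorphisms agree on `T`
  have hagree : ∀ t ∈ T, ψ₁ t = ψ₂ t := by
    intro t ht
    obtain ⟨k, hk⟩ := horder t ht
    rw [hψ₁T t ht k hk, hψ₂T t ht k hk]
  -- the difference cocycle
  set δ : S → S := fun x => ψ₂ x * (ψ₁ x)⁻¹ with hδ
  have hδT : ∀ x : S, δ x ∈ T := by
    intro x
    have h1 := hψ₁q x; have h2 := hψ₂q x
    have hx : δ x = x * ((x⁻¹ * ψ₂ x) * (x⁻¹ * ψ₁ x)⁻¹) * x⁻¹ := by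
      simp [hδ]; group
    rw [hx]
    exact Subgroup.Normal.conj_mem inferInstance _ (mul_mem h2 (inv_mem h1)) x
  have hδcoset : ∀ x t : S, t ∈ T → δ (x * t) = δ x := by
    intro x t ht
    simp only [hδ, map_mul]
    rw [← hagree t ht]
    group
  -- uniform bound on the order of δ, via finiteness of `S ⧸ T`
  have key : ∀ q : S ⧸ T, ∃ k : ℕ, ∀ x : S, (x : S ⧸ T) = q → (δ x) ^ p ^ k = 1 := by
    intro q
    obtain ⟨k, hk⟩ := horder (δ q.out) (hδT _)
    refine ⟨k, fun x hx => ?_⟩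
    have hmem : (q.out)⁻¹ * x ∈ T := by
      rw [← QuotientGroup.eq]
      rw [hx]
      exact (QuotientGroup.out_eq' q).symm ▸ rfl
    have hxq : x = q.out * ((q.out)⁻¹ * x) := by group
    rw [hxq, hδcoset _ _ hmem]
    exact hk
  choose f hf using key
  haveI : Fintype (S ⧸ T) := Fintype.ofFinite _
  set K : ℕ := Finset.univ.sup f with hKdef
  have hKbound : ∀ x : S, (δ x) ^ p ^ K = 1 := by
    intro x
    exact hlift _ _ _ (Finset.le_sup (Finset.mem_univ _)) (hf (x : S ⧸ T) x rfl)
  refine ⟨K + 1, Nat.succ_pos K, ?_⟩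
  set s := K + 1 with hs
  have hδs : ∀ x : S, (δ x) ^ p ^ s = 1 := fun x =>
    hlift _ _ _ (Nat.le_succ K) (hKbound x)
  apply MulEquiv.ext
  intro x
  -- translation elements
  set τ₁ : S := ψ₁ x * x⁻¹ with hτ₁
  set τ₂ : S := ψ₂ x * x⁻¹ with hτ₂
  have hτ₁T : τ₁ ∈ T := by
    have h1 := hψ₁q x
    have : τ₁ = x * (x⁻¹ * ψ₁ x) * x⁻¹ := by rw [hτ₁]; group
    rw [this]
    exact Subgroup.Normal.conj_mem inferInstance _ h1 x
  have hτ₂T : τ₂ ∈ T := by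
    have h2 := hψ₂q x
    have : τ₂ = x * (x⁻¹ * ψ₂ x) * x⁻¹ := by rw [hτ₂]; group
    rw [this]
    exact Subgroup.Normal.conj_mem inferInstance _ h2 x
  obtain ⟨k₁, hk₁⟩ := horder τ₁ hτ₁T
  obtain ⟨k₂, hk₂⟩ := horder τ₂ hτ₂T
  set k : ℕ := max (max k₁ k₂) 1 with hkdef
  have hk₁' : τ₁ ^ p ^ k = 1 :=
    hlift _ _ _ (le_trans (le_max_left _ _) (le_max_left _ _)) hk₁
  have hk₂' : τ₂ ^ p ^ k = 1 :=
    hlift _ _ _ (le_trans (le_max_right _ _) (le_max_left _ _)) hk₂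
  set a : ℕ := PadicInt.appr (ζ : ℤ_[p]) k with hadef
  -- the iteration formula
  have formula : ∀ (ψ : MulAut S) (τ : S), ψ τ = τ ^ a → ψ x = τ * x →
      ∀ m : ℕ, (ψ ^ m) x = τ ^ (∑ i ∈ Finset.range m, a ^ i) * x := by
    intro ψ τ hψτ hψx m
    induction m with
    | zero => simp
    | succ m ih =>
      have hstep : (ψ ^ (m + 1)) x = ψ ((ψ ^ m) x) := by
        rw [pow_succ']
        rfl
      rw [hstep, ih, map_mul, map_pow, hψτ, hψx, ← pow_mul, ← mul_assoc, ← pow_succ]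
      congr 1
      rw [Finset.sum_range_succ']
      have : ∀ i, a ^ (i + 1) = a ^ i * a := fun i => pow_succ a i
      rw [Finset.sum_congr rfl fun i _ => this i, ← Finset.sum_mul]
      rw [mul_comm a, pow_zero]
  have hψ₁x : ψ₁ x = τ₁ * x := by rw [hτ₁]; group
  have hψ₂x : ψ₂ x = τ₂ * x := by rw [hτ₂]; group
  have h1 := formula ψ₁ τ₁ (hψ₁T τ₁ hτ₁T k hk₁') hψ₁x (p ^ s)
  have h2 := formula ψ₂ τ₂ (hψ₂T τ₂ hτ₂T k hk₂') hψ₂x (p ^ s)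
  set E : ℕ := ∑ i ∈ Finset.range (p ^ s), a ^ i with hEdef
  rw [h1, h2]
  -- `a ≡ 1 (mod p)`
  have hamod : ((a : ZMod p)) = 1 := by
    have hspec := PadicInt.appr_spec k (ζ : ℤ_[p])
    rw [Ideal.mem_span_singleton] at hspec
    obtain ⟨w, hw⟩ := hspec
    obtain ⟨v, hv⟩ := hζ1
    have ha' : ((a : ℕ) : ℤ_[p]) = (ζ : ℤ_[p]) - (p : ℤ_[p]) ^ k * w := by
      rw [← hw]; ring
    have hk1 : k ≠ 0 := by
      have : 1 ≤ k := le_max_right _ _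
      omega
    calc ((a : ℕ) : ZMod p) = PadicInt.toZMod (((a : ℕ) : ℤ_[p])) := (map_natCast _ _).symm
      _ = PadicInt.toZMod ((ζ : ℤ_[p]) - (p : ℤ_[p]) ^ k * w) := by rw [ha']
      _ = 1 := by
          rw [map_sub, map_mul, map_pow, hv, map_add, map_mul, map_natCast,
            ZMod.natCast_self, map_one]
          simp [zero_pow hk1]
  have hEdvd : p ^ s ∣ E := pow_dvd_geom_sum_aux p a hamod s
  -- finish
  have hδx : δ x = τ₂ * τ₁⁻¹ := by simp only [hδ, hτ₁, hτ₂]; group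
  have hτ₂eq : τ₂ = δ x * τ₁ := by rw [hδx]; group
  have hcom : Commute (δ x) τ₁ := hcomm _ _ (hδT x) hτ₁T
  have hδE : (δ x) ^ E = 1 := by
    obtain ⟨c, hc⟩ := hEdvd
    rw [hc, pow_mul, hδs x, one_pow]
  rw [hτ₂eq, hcom.mul_pow, hδE, one_mul]
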